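/- The category of supported sets over A is complete: the limit of a diagram D is the subset of elements x of the limit of underlying sets such that the union over all objects Y of the diagram of s(pr_Y(x)) is finite, with this union as the support of x. -/

import Mathlib

open CategoryTheory

/-- A supported set over `A`: a set with a finite support for each element. -/
structure SuppSet (A : Type) : Type 1 where
  carrier : Type
  supp : carrier → Set A
  finite : ∀ x, (supp x).Finite

variable {A : Type}

instance : Category (SuppSet A) where
  Hom X Y := {f : X.carrier → Y.carrier // ∀ x, Y.supp (f x) ⊆ X.supp x}
  id _ := ⟨fun x => x, fun _ => subset_rfl⟩
  comp f g := ⟨fun x => g.1 (f.1 x), fun x => (g.2 _).trans (f.2 x)⟩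
  id_comp _ := Subtype.ext rfl
  comp_id _ := Subtype.ext rfl
  assoc _ _ _ := Subtype.ext rfl

/-- The forgetful functor from supported sets to sets. -/
def Forget (A : Type) : SuppSet A ⥤ Type where
  obj X := X.carrier
  map f := TypeCat.ofHom f.1
  map_id _ := rfl
  map_comp _ _ := rfl

open Limits

/-- The limit of a diagram of supported sets: those compatible families whose
supports have finite union, supported by that union. -/
def limitObj {J : Type} [SmallCategory J] (D : J ⥤ SuppSet A) : SuppSet A where
  carrier := {x : ∀ j, (D.obj j).carrier //
      (∀ {j j'} (f : j ⟶ j'), (D.map f).1 (x j) = x j') ∧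
      (⋃ j, (D.obj j).supp (x j)).Finite}
  supp := fun x => ⋃ j, (D.obj j).supp (x.1 j)
  finite := fun x => x.2.2

/-- The limiting cone on `limitObj`. -/
def limitCone {J : Type} [SmallCategory J] (D : J ⥤ SuppSet A) : Cone D where
  pt := limitObj D
  π :=
    { app := fun j => ⟨fun x => x.1 j,
        fun x => Set.subset_iUnion (fun j => (D.obj j).supp (x.1 j)) j⟩
      naturality := fun j j' f => Subtype.ext (funext fun x => (x.2.1 f).symm) }

/-- `Supp(A)` is complete; the limit of a diagram `D` is the subset of the
limit of underlying sets consisting of the elements whose supports have finite union,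
with that union as support. -/
theorem suppSet_complete (A : Type) :
    HasLimits (SuppSet A) ∧
    (∀ (J : Type) (_ : SmallCategory J) (D : J ⥤ SuppSet A),
      Nonempty (IsLimit (limitCone D))) := by
  have key : ∀ (J : Type) (_ : SmallCategory J) (D : J ⥤ SuppSet A),
      IsLimit (limitCone D) := by
    intro J _ D
    refine
      { lift := fun s => ⟨fun x => ⟨fun j => (s.π.app j).1 x, ?_, ?_⟩, ?_⟩
        fac := fun s j => Subtype.ext rfl
        uniq := fun s m hm => ?_ }
    · intro j j' f
      exact congrFun (congrArg Subtype.val (s.w f)) x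
    · exact (s.pt.finite x).subset (Set.iUnion_subset fun j => (s.π.app j).2 x)
    · intro x
      exact Set.iUnion_subset fun j => (s.π.app j).2 x
    · refine Subtype.ext (funext fun x => Subtype.ext (funext fun j => ?_))
      exact congrFun (congrArg Subtype.val (hm j)) x
  refine ⟨⟨fun {J} _ => ⟨fun {D} => ⟨⟨limitCone D, key J _ D⟩⟩⟩⟩, fun J _ D => ⟨key J _ D⟩⟩
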